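/- Let q be a prime, m ≥ 1, k ≥ 1, and let G be a finite simple graph with vertex set {0,1}^m, adjacency indicator A : {0,1}^m × {0,1}^m → F_q, and multilinear extension Ã : F_q^m × F_q^m → F_q. Then, in F_q, Σ_{v₁,…,v_k ∈ {0,1}^m} ∏_{1≤i,j≤k, i≠j} Ã(v_i, v_j) equals the image in F_q of the natural number k! · C, where C is the number of k-cliques of G. -/

import Mathlib

/-- The embedding of the Boolean cube `{0,1}^m` into `F_q^m`. -/
def cubeEmb (q : ℕ) {m : ℕ} (z : Fin m → Bool) : Fin m → ZMod q :=
  fun ℓ => if z ℓ then 1 else 0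

/-- The multilinear extension `Ã : F_q^m × F_q^m → F_q` of the adjacency indicator
`A : {0,1}^m × {0,1}^m → F_q` (where `A(u,v) = 1` iff `u` and `v` are adjacent):
`Ã(x,y) = Σ_{z,w ∈ {0,1}^m} A(z,w) · ∏_ℓ (x_ℓ·z_ℓ + (1−x_ℓ)(1−z_ℓ))·(y_ℓ·w_ℓ + (1−y_ℓ)(1−w_ℓ))`. -/
def adjMle (q m : ℕ) [NeZero q] (G : SimpleGraph (Fin m → Bool)) [DecidableRel G.Adj]
    (x y : Fin m → ZMod q) : ZMod q :=
  ∑ z : Fin m → Bool, ∑ w : Fin m → Bool,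
    (if G.Adj z w then (1 : ZMod q) else 0) *
      ∏ ℓ : Fin m,
        ((x ℓ * cubeEmb q z ℓ + (1 - x ℓ) * (1 - cubeEmb q z ℓ)) *
         (y ℓ * cubeEmb q w ℓ + (1 - y ℓ) * (1 - cubeEmb q w ℓ)))

lemma cube_prod (q : ℕ) {m : ℕ} (u z : Fin m → Bool) :
    (∏ ℓ : Fin m, (cubeEmb q u ℓ * cubeEmb q z ℓ +
        (1 - cubeEmb q u ℓ) * (1 - cubeEmb q z ℓ)))
      = if z = u then (1 : ZMod q) else 0 := by
  have h : ∀ ℓ, (cubeEmb q u ℓ * cubeEmb q z ℓ +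
      (1 - cubeEmb q u ℓ) * (1 - cubeEmb q z ℓ))
      = if z ℓ = u ℓ then (1 : ZMod q) else 0 := by
    intro ℓ
    cases hu : u ℓ <;> cases hz : z ℓ <;> simp [cubeEmb, hu, hz]
  simp_rw [h, Finset.prod_boole]
  simp [funext_iff]

lemma adjMle_cube (q m : ℕ) [NeZero q] (G : SimpleGraph (Fin m → Bool))
    [DecidableRel G.Adj] (u v : Fin m → Bool) :
    adjMle q m G (cubeEmb q u) (cubeEmb q v) = if G.Adj u v then 1 else 0 := by
  unfold adjMle
  have h : ∀ z w : Fin m → Bool,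
      (∏ ℓ : Fin m,
        ((cubeEmb q u ℓ * cubeEmb q z ℓ + (1 - cubeEmb q u ℓ) * (1 - cubeEmb q z ℓ)) *
         (cubeEmb q v ℓ * cubeEmb q w ℓ + (1 - cubeEmb q v ℓ) * (1 - cubeEmb q w ℓ))))
      = (if z = u then (1 : ZMod q) else 0) * (if w = v then 1 else 0) := by
    intro z w
    rw [Finset.prod_mul_distrib, cube_prod, cube_prod]
  simp_rw [h]
  simp [Finset.sum_ite_eq', mul_ite, ite_mul]

lemma count_cliques {V : Type*} [Fintype V] [DecidableEq V] (k : ℕ)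
    (G : SimpleGraph V) [DecidableRel G.Adj] :
    (Finset.univ.filter
        (fun v : Fin k → V => ∀ i j : Fin k, i ≠ j → G.Adj (v i) (v j))).card
      = Nat.factorial k * (G.cliqueFinset k).card := by
  classical
  have hmem : ∀ v ∈ Finset.univ.filter
      (fun v : Fin k → V => ∀ i j : Fin k, i ≠ j → G.Adj (v i) (v j)),
      Finset.image v Finset.univ ∈ G.cliqueFinset k := by
    intro v hv
    rw [Finset.mem_filter] at hv
    have hP := hv.2
    have hinj : Function.Injective v := by
      intro i j hij
      by_contra hne
      exact G.loopless.irrefl (v i) (by simpa [hij] using hP i j hne)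
    rw [SimpleGraph.mem_cliqueFinset_iff]
    constructor
    · intro x hx y hy hxy
      simp only [Finset.coe_image, Finset.coe_univ, Set.image_univ,
        Set.mem_range] at hx hy
      obtain ⟨i, rfl⟩ := hx
      obtain ⟨j, rfl⟩ := hy
      exact hP i j (fun h => hxy (by rw [h]))
    · rw [Finset.card_image_of_injective _ hinj, Finset.card_univ, Fintype.card_fin]
  rw [Finset.card_eq_sum_card_fiberwise hmem]
  rw [Finset.sum_congr rfl (fun s hs => ?_), Finset.sum_const, smul_eq_mul,
    Nat.mul_comm]
  -- fiber has cardinality k!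
  rw [SimpleGraph.mem_cliqueFinset_iff] at hs
  have hcard : s.card = k := hs.2
  have hclique := hs.1
  rw [Finset.filter_filter]
  rw [show ((Finset.univ.filter
      (fun v : Fin k → V => (∀ i j : Fin k, i ≠ j → G.Adj (v i) (v j)) ∧
        Finset.image v Finset.univ = s))).card
      = Fintype.card {v : Fin k → V //
          (∀ i j : Fin k, i ≠ j → G.Adj (v i) (v j)) ∧
          Finset.image v Finset.univ = s} from (Fintype.card_subtype _).symm]
  have e : {v : Fin k → V //
      (∀ i j : Fin k, i ≠ j → G.Adj (v i) (v j)) ∧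
      Finset.image v Finset.univ = s} ≃ (Fin k ↪ {x // x ∈ s}) := by
    refine
      { toFun := fun v => ⟨fun i => ⟨v.1 i, ?_⟩, ?_⟩
        invFun := fun e => ⟨fun i => (e i : V), ?_, ?_⟩
        left_inv := fun v => rfl
        right_inv := fun e => by ext i; rfl }
    · have h := Finset.mem_image_of_mem v.1 (Finset.mem_univ i)
      rwa [v.2.2] at h
    · intro i j hij
      simp only [Subtype.mk_eq_mk] at hij
      by_contra hne
      exact G.loopless.irrefl (v.1 i) (by simpa [hij] using v.2.1 i j hne)
    · intro i j hij
      exact hclique (e i).2 (e j).2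
        (fun h => hij (e.injective (Subtype.ext h)))
    · -- image = s
      have hsub : Finset.image (fun i => ((e i : {x // x ∈ s}) : V)) Finset.univ ⊆ s := by
        intro x hx
        simp only [Finset.mem_image] at hx
        obtain ⟨i, _, rfl⟩ := hx
        exact (e i).2
      have hinj : Function.Injective (fun i => ((e i : {x // x ∈ s}) : V)) :=
        fun i j h => e.injective (Subtype.ext h)
      refine Finset.eq_of_subset_of_card_le hsub ?_
      rw [Finset.card_image_of_injective _ hinj, Finset.card_univ,
        Fintype.card_fin, hcard]
  rw [Fintype.card_congr e, Fintype.card_embedding_eq, Fintype.card_coe, hcard,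
    Fintype.card_fin, Nat.descFactorial_self]

theorem stmt_17 (q m k : ℕ) [Fact (Nat.Prime q)] (hm : 1 ≤ m) (hk : 1 ≤ k)
    (G : SimpleGraph (Fin m → Bool)) [DecidableRel G.Adj] :
    (∑ v : Fin k → (Fin m → Bool),
        ∏ p ∈ Finset.univ.filter (fun p : Fin k × Fin k => p.1 ≠ p.2),
          adjMle q m G (cubeEmb q (v p.1)) (cubeEmb q (v p.2)))
      = ((Nat.factorial k * (G.cliqueFinset k).card : ℕ) : ZMod q) := by
  classical
  have h1 : ∀ v : Fin k → (Fin m → Bool),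
      (∏ p ∈ Finset.univ.filter (fun p : Fin k × Fin k => p.1 ≠ p.2),
        adjMle q m G (cubeEmb q (v p.1)) (cubeEmb q (v p.2)))
      = if ∀ i j : Fin k, i ≠ j → G.Adj (v i) (v j) then (1 : ZMod q) else 0 := by
    intro v
    simp_rw [adjMle_cube]
    rw [Finset.prod_boole]
    congr 1
    simp only [Finset.mem_filter, Finset.mem_univ, true_and, eq_iff_iff]
    constructor
    · intro h i j hij; exact h (i, j) hij
    · intro h p hp; exact h p.1 p.2 hp
  simp_rw [h1]
  rw [Finset.sum_boole, count_cliques k G]
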